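/- Let μ be a Borel probability measure on ℝ that is absolutely continuous with respect to Lebesgue measure, let t > 0, and let σ_t denote the Gaussian distribution on ℝ with mean 0 and variance t. Suppose μ((-∞, 0]) ≠ 0 and μ([0, ∞)) ≠ 0. Then every measurable function f : ℝ → ℝ that is square-integrable with respect to the convolution μ ∗ σ_t is also square-integrable with respect to σ_t. -/

import Mathlib

open MeasureTheory ProbabilityTheory Real
open scoped ENNReal NNReal

lemma aux_lintegral_lt_top (t : NNReal) (ht : 0 < t) (F : ℝ → ℝ≥0∞) (hF : Measurable F)
    (x : ℝ) (S : Set ℝ) (hSm : MeasurableSet S) (hS : ∀ u ∈ S, 0 ≤ u * x)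
    (hfin : ∫⁻ s, F (x + s) ∂(gaussianReal 0 t) < ⊤) :
    ∫⁻ u in S, F u ∂(gaussianReal 0 t) < ⊤ := by
  have ht' : (t : ℝ≥0) ≠ 0 := ht.ne'
  have ht0 : (0:ℝ) < (t:ℝ) := ht
  rw [gaussianReal_of_var_ne_zero _ ht'] at hfin ⊢
  rw [lintegral_withDensity_eq_lintegral_mul _ (measurable_gaussianPDF _ _)
    (by fun_prop : Measurable fun s => F (x + s))] at hfin
  rw [restrict_withDensity hSm, lintegral_withDensity_eq_lintegral_mul _
    (measurable_gaussianPDF _ _) hF]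
  -- change of variables in hfin
  have hcv : ∫⁻ u, gaussianPDF 0 t (u - x) * F u = ∫⁻ s, gaussianPDF 0 t s * F (x + s) := by
    rw [← lintegral_add_left_eq_self (fun u => gaussianPDF 0 t (u - x) * F u) x]
    simp
  set C : ℝ≥0∞ := ENNReal.ofReal (rexp (x ^ 2 / (2 * t))) with hC
  have hCne : C ≠ ⊤ := ENNReal.ofReal_ne_top
  have key : ∀ u ∈ S, (gaussianPDF 0 t * fun u => F u) u
      ≤ C * (gaussianPDF 0 t (u - x) * F u) := by
    intro u hu
    simp only [Pi.mul_apply]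
    rw [← mul_assoc]
    gcongr
    rw [gaussianPDF, gaussianPDF, hC, ← ENNReal.ofReal_mul (Real.exp_nonneg _)]
    apply ENNReal.ofReal_le_ofReal
    rw [gaussianPDFReal, gaussianPDFReal, mul_comm (rexp (x ^ 2 / (2 * ↑t))), mul_assoc]
    have h2t : (0:ℝ) < 2 * t := by linarith
    rw [mul_assoc, ← Real.exp_add]
    refine mul_le_mul_of_nonneg_left ?_ (by positivity)
    rw [Real.exp_le_exp, ← add_div, div_le_div_iff₀ h2t h2t]
    nlinarith [hS u hu]
  calc ∫⁻ u in S, (gaussianPDF 0 t * fun u => F u) u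
      ≤ ∫⁻ u in S, C * (gaussianPDF 0 t (u - x) * F u) := by
        refine setLIntegral_mono' hSm key
    _ ≤ C * ∫⁻ u, gaussianPDF 0 t (u - x) * F u := by
        rw [← lintegral_const_mul' _ _ hCne]
        exact lintegral_mono' Measure.restrict_le_self le_rfl
    _ = C * ∫⁻ s, gaussianPDF 0 t s * F (x + s) := by rw [hcv]
    _ < ⊤ := ENNReal.mul_lt_top hCne.lt_top hfin

/-- If `μ` is a Lebesgue-absolutely continuous probability measure on `ℝ` charging both
`(-∞, 0]` and `[0, ∞)`, and `σ_t` is the centered Gaussian measure with variance `t > 0`,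
then `L²(μ ∗ σ_t) ⊆ L²(σ_t)`. -/
theorem memL2_gaussian_of_memL2_conv
    (μ : Measure ℝ) [IsProbabilityMeasure μ] (hac : μ ≪ volume)
    (t : NNReal) (ht : 0 < t)
    (hneg : μ (Set.Iic 0) ≠ 0) (hpos : μ (Set.Ici 0) ≠ 0)
    (f : ℝ → ℝ) (hf : Measurable f)
    (hmem : MemLp f 2 (Measure.conv μ (gaussianReal 0 t))) :
    MemLp f 2 (gaussianReal 0 t) := by
  set ν := gaussianReal 0 t with hν
  have hint : Integrable (fun x => f x ^ 2) (Measure.conv μ ν) :=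
    (memLp_two_iff_integrable_sq hf.aestronglyMeasurable).1 hmem
  set F : ℝ → ℝ≥0∞ := fun s => (‖f s ^ 2‖₊ : ℝ≥0∞) with hFdef
  have hFm : Measurable F := (hf.pow_const 2).nnnorm.coe_nnreal_ennreal
  have hconv : ∫⁻ p, F p ∂(Measure.conv μ ν) < ⊤ := hint.2
  rw [Measure.conv, lintegral_map hFm measurable_add,
    lintegral_prod _ (by fun_prop : AEMeasurable (fun z : ℝ × ℝ => F (z.1 + z.2)) (μ.prod ν))] at hconv
  have hg : Measurable fun x => ∫⁻ s, F (x + s) ∂ν :=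
    Measurable.lintegral_prod_right (by fun_prop : Measurable fun z : ℝ × ℝ => F (z.1 + z.2))
  have hae : ∀ᵐ x ∂μ, ∫⁻ s, F (x + s) ∂ν < ⊤ := ae_lt_top hg hconv.ne
  set T : Set ℝ := {x | ∫⁻ s, F (x + s) ∂ν < ⊤} with hT
  have hTc : μ Tᶜ = 0 := by
    rw [hT, Set.compl_setOf]
    simpa using ae_iff.1 hae
  have hpick : ∀ S : Set ℝ, μ S ≠ 0 → ∃ x ∈ S, ∫⁻ s, F (x + s) ∂ν < ⊤ := by
    intro S hSne
    have : μ (S ∩ T) ≠ 0 := by rwa [measure_inter_conull hTc]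
    obtain ⟨x, hx⟩ := nonempty_of_measure_ne_zero this
    exact ⟨x, hx.1, hx.2⟩
  obtain ⟨xp, hxp, hxpfin⟩ := hpick _ hpos
  obtain ⟨xn, hxn, hxnfin⟩ := hpick _ hneg
  rw [memLp_two_iff_integrable_sq hf.aestronglyMeasurable]
  refine ⟨(hf.pow_const 2).aestronglyMeasurable, ?_⟩
  rw [hasFiniteIntegral_def]
  have : ∫⁻ a, (‖f a ^ 2‖₊ : ℝ≥0∞) ∂ν = ∫⁻ a in Set.Iic 0 ∪ Set.Ici 0, F a ∂ν := by
    rw [Set.Iic_union_Ici, Measure.restrict_univ]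
  rw [show ∫⁻ a, ‖f a ^ 2‖ₑ ∂ν = _ from this]
  refine lt_of_le_of_lt (lintegral_union_le _ _ _) (ENNReal.add_lt_top.2 ⟨?_, ?_⟩)
  · exact aux_lintegral_lt_top t ht F hFm xn _ measurableSet_Iic
      (fun u hu => by nlinarith [Set.mem_Iic.1 hu, Set.mem_Iic.1 hxn]) hxnfin
  · exact aux_lintegral_lt_top t ht F hFm xp _ measurableSet_Ici
      (fun u hu => mul_nonneg hu hxp) hxpfin
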